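/- For positive integers k, l with kl > 1, the set T_{k,l} = {(x,y) ∈ T : k_1(x,y) = k, k_2(x,y) = l} equals {(x,y) ∈ T_k : (1+(l+1)x)/(k(l+1)−1) < y ≤ (1+lx)/(kl−1)}, where T_k = {(x,y) ∈ T : k_1(x,y) = k}. -/

import Mathlib

/-- The Farey triangle. -/
def FareyTriangle : Set (ℝ × ℝ) := {p | 0 < p.1 ∧ p.1 ≤ 1 ∧ 1 < p.1 + p.2 ∧ p.2 ≤ 1}

/-- `k_1(x,y) = ⌊(1+x)/y⌋`. -/
noncomputable def k1 (p : ℝ × ℝ) : ℤ := ⌊(1 + p.1) / p.2⌋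

/-- `L_2(x,y) = k_1(x,y)·y − x`. -/
noncomputable def L2 (p : ℝ × ℝ) : ℝ := k1 p * p.2 - p.1

/-- `k_2(x,y) = ⌊(1+y)/L_2(x,y)⌋`. -/
noncomputable def k2 (p : ℝ × ℝ) : ℤ := ⌊(1 + p.2) / L2 p⌋

/-- The polygon `T_k`. -/
noncomputable def Tk (k : ℤ) : Set (ℝ × ℝ) := {p ∈ FareyTriangle | k1 p = k}

/-- The polygon `T_{k,l}`. -/
noncomputable def Tkl (k l : ℤ) : Set (ℝ × ℝ) := {p ∈ FareyTriangle | k1 p = k ∧ k2 p = l}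

/-- For positive integers `k, l` with `kl > 1`,
`T_{k,l} = {(x,y) ∈ T_k : (1+(l+1)x)/(k(l+1)−1) < y ≤ (1+lx)/(kl−1)}`. -/
theorem stmt11 (k l : ℤ) (hk : 1 ≤ k) (hl : 1 ≤ l) (hkl : 1 < k * l) :
    Tkl k l = {p ∈ Tk k |
      (1 + ((l : ℝ) + 1) * p.1) / ((k : ℝ) * ((l : ℝ) + 1) - 1) < p.2 ∧
        p.2 ≤ (1 + (l : ℝ) * p.1) / ((k : ℝ) * (l : ℝ) - 1)} := by
  have hkR : (1 : ℝ) ≤ (k : ℝ) := by exact_mod_cast hk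
  have hlR : (1 : ℝ) ≤ (l : ℝ) := by exact_mod_cast hl
  have hklR : (1 : ℝ) < (k : ℝ) * l := by exact_mod_cast hkl
  have hd1 : (0 : ℝ) < (k : ℝ) * ((l : ℝ) + 1) - 1 := by nlinarith
  have hd2 : (0 : ℝ) < (k : ℝ) * (l : ℝ) - 1 := by linarith
  ext ⟨x, y⟩
  simp only [Tkl, Tk, FareyTriangle, Set.mem_setOf_eq, Set.mem_sep_iff]
  -- common facts given p ∈ T_k
  constructor
  · rintro ⟨hF, hk1, hk2⟩
    obtain ⟨hx0, hx1, hxy, hy1⟩ := hF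
    have hy0 : (0 : ℝ) < y := by linarith
    have hfl := (Int.floor_eq_iff (R := ℝ) (z := k)).mp hk1
    obtain ⟨hge, hlt⟩ := hfl
    rw [le_div_iff₀ hy0] at hge
    rw [div_lt_iff₀ hy0] at hlt
    have hL : (0 : ℝ) < k * y - x := by nlinarith
    have hLval : L2 (x, y) = (k : ℝ) * y - x := by
      unfold L2
      rw [hk1]
    have hfl2 := (Int.floor_eq_iff (R := ℝ) (z := l)).mp
      (by simpa [k2] using hk2)
    rw [hLval] at hfl2
    obtain ⟨hge2, hlt2⟩ := hfl2
    rw [le_div_iff₀ hL] at hge2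
    rw [div_lt_iff₀ hL] at hlt2
    push_cast at hge2 hlt2
    refine ⟨⟨⟨hx0, hx1, hxy, hy1⟩, hk1⟩, ?_, ?_⟩
    · rw [div_lt_iff₀ hd1]; nlinarith
    · rw [le_div_iff₀ hd2]; nlinarith
  · rintro ⟨⟨⟨hx0, hx1, hxy, hy1⟩, hk1⟩, h1, h2⟩
    have hy0 : (0 : ℝ) < y := by linarith
    have hfl := (Int.floor_eq_iff (R := ℝ) (z := k)).mp hk1
    obtain ⟨hge, hlt⟩ := hfl
    rw [le_div_iff₀ hy0] at hge
    rw [div_lt_iff₀ hy0] at hlt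
    have hL : (0 : ℝ) < k * y - x := by nlinarith
    have hLval : L2 (x, y) = (k : ℝ) * y - x := by
      unfold L2
      rw [hk1]
    rw [div_lt_iff₀ hd1] at h1
    rw [le_div_iff₀ hd2] at h2
    refine ⟨⟨hx0, hx1, hxy, hy1⟩, hk1, ?_⟩
    have : ⌊(1 + y) / L2 (x, y)⌋ = l := by
      rw [Int.floor_eq_iff, hLval]
      constructor
      · rw [le_div_iff₀ hL]; push_cast; nlinarith
      · rw [div_lt_iff₀ hL]; push_cast; nlinarith
    simpa [k2] using this
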